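/- For a complex semisimple Lie algebra g of rank ℓ with cascade B of cardinality m, one has −1 ∈ W if and only if m = ℓ. -/
import Mathlib

open scoped RealInnerProductSpace

/-- For a complex semisimple Lie algebra of rank `ℓ` (whose root system
`Δ`, with positive system `Δpos`, is realized in the real inner product space `V = h_ℝ*`
of dimension `ℓ`, with Weyl group `W`), with cascade `B` of cardinality `m`:
one has `-1 ∈ W` if and only if `m = ℓ`.

The relevant facts from the paper's Part A are hypotheses: the cascade `B` is a set of
pairwise orthogonal (nonzero) positive roots of cardinality `m`, the product `w₀` of the
associated (commuting) reflections is an element of `W` — given by the closed formula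
`w₀ v = v - ∑_{β ∈ B} (2⟪β,v⟫/⟪β,β⟫) β` valid for products of commuting reflections —
and `w₀` is the longest element of `W`, i.e. the unique element of `W` sending `Δ₊`
to `Δ₋`. -/
theorem neg_one_mem_weylGroup_iff_cascade_card_eq_rank
    {V : Type*} [NormedAddCommGroup V] [InnerProductSpace ℝ V] [FiniteDimensional ℝ V]
    (Δ Δpos : Set V) (B : Finset V) (ℓ m : ℕ)
    (W : Subgroup (V ≃ₗ[ℝ] V))
    (hdim : Module.finrank ℝ V = ℓ)
    (hcard : B.card = m)
    (hBpos : (B : Set V) ⊆ Δpos) (hpossub : Δpos ⊆ Δ)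
    (hroot : ∀ β ∈ B, β ≠ 0)
    (horth : (B : Set V).Pairwise fun β γ => ⟪β, γ⟫ = 0)
    -- `w₀`, the product of the commuting reflections `s_β`, `β ∈ B`, lies in `W`:
    (w₀ : V ≃ₗ[ℝ] V) (hw₀W : w₀ ∈ W)
    (hw₀prod : ∀ v : V, w₀ v = v - ∑ β ∈ B, (2 * ⟪β, v⟫ / ⟪β, β⟫) • β)
    -- and `w₀` is the longest element of `W`: it maps `Δ₊` to `Δ₋`,
    (hw₀long : ∀ α ∈ Δpos, -(w₀ α) ∈ Δpos)
    -- and it is the unique element of `W` doing so: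
    (huniq : ∀ w ∈ W, (∀ α ∈ Δpos, -(w α) ∈ Δpos) → w = w₀) :
    LinearEquiv.neg ℝ ∈ W ↔ m = ℓ := by
  -- B is linearly independent
  have hli : LinearIndependent ℝ ((↑) : ↥(B : Set V) → V) :=
    linearIndependent_of_ne_zero_of_inner_eq_zero
      (fun i => hroot i i.2)
      (fun i j hij => horth i.2 j.2 (fun h => hij (Subtype.ext h)))
  constructor
  · intro hneg
    have hEq : LinearEquiv.neg ℝ = w₀ :=
      huniq _ hneg (fun α hα => by simpa using hα)
    -- every v is in the span of B
    have hspan : Submodule.span ℝ (B : Set V) = ⊤ := by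
      rw [Submodule.eq_top_iff']
      intro v
      have h1 : (LinearEquiv.neg ℝ) v = -v := rfl
      have h2 : -v = v - ∑ β ∈ B, (2 * ⟪β, v⟫ / ⟪β, β⟫) • β := by
        rw [← h1, hEq, hw₀prod]
      have h3 : (2 : ℝ) • v = ∑ β ∈ B, (2 * ⟪β, v⟫ / ⟪β, β⟫) • β := by
        linear_combination (norm := module) -h2
      have hmem : (2 : ℝ) • v ∈ Submodule.span ℝ (B : Set V) := by
        rw [h3]
        exact Submodule.sum_smul_mem _ _ (fun β hβ => Submodule.subset_span hβ)
      have := Submodule.smul_mem _ ((2 : ℝ)⁻¹) hmem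
      rwa [smul_smul, inv_mul_cancel₀ (two_ne_zero), one_smul] at this
    have : B.card = Module.finrank ℝ V := by
      rw [← finrank_span_finset_eq_card hli, hspan, finrank_top]
    omega
  · intro hml
    -- span B = ⊤
    have hspan : Submodule.span ℝ (B : Set V) = ⊤ := by
      apply Submodule.eq_top_of_finrank_eq
      rw [finrank_span_finset_eq_card hli, hcard, hml, hdim]
    -- show w₀ = -1 via linearity
    have key : ∀ v : V, w₀ v = -v := by
      -- define the linear map v ↦ ∑ (2⟪β,v⟫/⟪β,β⟫)•β
      set f : V →ₗ[ℝ] V :=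
        ∑ β ∈ B, (2 / ⟪β, β⟫) • ((innerSL ℝ β).toLinearMap.smulRight β) with hf
      have hfapp : ∀ v : V, f v = ∑ β ∈ B, (2 * ⟪β, v⟫ / ⟪β, β⟫) • β := by
        intro v
        rw [hf, LinearMap.sum_apply]
        refine Finset.sum_congr rfl (fun β hβ => ?_)
        simp only [LinearMap.smul_apply, LinearMap.smulRight_apply,
          ContinuousLinearMap.coe_coe, innerSL_apply_apply, smul_smul]
        congr 1
        ring
      have hf2 : f = (2 : ℝ) • LinearMap.id := by
        apply LinearMap.ext_on hspan
        intro β₀ hβ₀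
        rw [hfapp]
        rw [Finset.sum_eq_single β₀]
        · have hne : ⟪β₀, β₀⟫ ≠ 0 := by
            rw [inner_self_ne_zero]
            exact hroot β₀ hβ₀
          rw [mul_div_assoc, div_self hne, mul_one]
          simp [two_smul]
        · intro β hβ hne
          rw [horth (Finset.mem_coe.2 hβ) hβ₀ hne]
          simp
        · intro h; exact absurd hβ₀ h
      intro v
      have : f v = (2 : ℝ) • v := by rw [hf2]; rfl
      rw [hw₀prod, ← hfapp, this]
      module
    have : LinearEquiv.neg ℝ = w₀ := by
      ext v
      simp [key v]
    rw [this]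
    exact hw₀W
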